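/- Let (G,X) be a G-flow, M a minimal left ideal of the Ellis semigroup E(X), u ∈ M an idempotent, and A ⊆ uM. Then the τ-closure cl_τ(A) = uM ∩ (u ∘ A) equals the set of all p ∈ uM such that the pair (u, p) lies in the closure, in (X^X) × (X^X) with the product topology, of the set {(η, η ∘ a) : η ∈ M, a ∈ A}. -/
import Mathlib


/-- The Ellis semigroup of the flow `(G, X)`: the pointwise closure in `X → X` of the set of
translation maps `x ↦ g • x`. -/
def ellisSemigroup (G X : Type*) [SMul G X] [TopologicalSpace X] : Set (X → X) :=
  closure (Set.range fun g : G => fun x : X => g • x)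

/-- `M` is a minimal left ideal of the Ellis semigroup of `(G, X)`: a minimal element of the
family of nonempty closed subsets of the Ellis semigroup closed under left composition with
arbitrary elements of the Ellis semigroup. -/
def IsMinimalLeftIdeal (G X : Type*) [SMul G X] [TopologicalSpace X]
    (M : Set (X → X)) : Prop :=
  (M.Nonempty ∧ M ⊆ ellisSemigroup G X ∧ IsClosed M ∧
    ∀ η ∈ ellisSemigroup G X, ∀ m ∈ M, η ∘ m ∈ M) ∧
  ∀ M' : Set (X → X),
    (M'.Nonempty ∧ M' ⊆ ellisSemigroup G X ∧ IsClosed M' ∧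
      ∀ η ∈ ellisSemigroup G X, ∀ m ∈ M', η ∘ m ∈ M') → M' ⊆ M → M' = M

/-- For `a : X → X` and `B ⊆ X → X`, the set `a ∘ B` of all limits of nets `(π_{g_i} ∘ b_i)`
with `b_i ∈ B` and `lim π_{g_i} = a`: all `p` such that `(a, p)` lies in the closure of
`{(π_g, π_g ∘ b) : g ∈ G, b ∈ B}` in `(X → X) × (X → X)`. -/
def circOp (G : Type*) {X : Type*} [SMul G X] [TopologicalSpace X] (a : X → X)
    (B : Set (X → X)) : Set (X → X) :=
  {p | (a, p) ∈ closure {q : (X → X) × (X → X) |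
    ∃ (g : G), ∃ b ∈ B, q = (fun x : X => g • x, (fun x : X => g • x) ∘ b)}}

/-- Let `(G,X)` be a flow, `M` a minimal left ideal of the Ellis semigroup `E(X)`, `u ∈ M` an
idempotent and `A ⊆ uM`.  Then the `τ`-closure `cl_τ(A) = uM ∩ (u ∘ A)` equals the set of all
`p ∈ uM` such that `(u, p)` lies in the closure of `{(η, η ∘ a) : η ∈ M, a ∈ A}` in
`(X → X) × (X → X)`. -/
theorem statement15 {G X : Type*} [Group G] [TopologicalSpace X] [CompactSpace X] [T2Space X]
    [MulAction G X] (hc : ∀ g : G, Continuous fun x : X => g • x)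
    (M : Set (X → X)) (hM : IsMinimalLeftIdeal G X M)
    (u : X → X) (huM : u ∈ M) (hu : u ∘ u = u)
    (A : Set (X → X)) (hA : A ⊆ (fun m => u ∘ m) '' M) :
    ((fun m => u ∘ m) '' M) ∩ circOp G u A =
      {p | p ∈ (fun m => u ∘ m) '' M ∧
        (u, p) ∈ closure {q : (X → X) × (X → X) | ∃ η ∈ M, ∃ a ∈ A, q = (η, η ∘ a)}} := by
  obtain ⟨⟨_, hME, _, hideal⟩, _⟩ := hM
  have hub : ∀ b ∈ A, u ∘ b = b := by
    intro b hb
    obtain ⟨m, hm, rfl⟩ := hA hb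
    rw [← Function.comp_assoc, hu]
  set S1 : Set ((X → X) × (X → X)) :=
    {q | ∃ g : G, ∃ b ∈ A, q = (fun x : X => g • x, (fun x : X => g • x) ∘ b)} with hS1
  set S2 : Set ((X → X) × (X → X)) := {q | ∃ η ∈ M, ∃ a ∈ A, q = (η, η ∘ a)} with hS2
  ext p
  simp only [Set.mem_inter_iff, Set.mem_setOf_eq, circOp]
  refine and_congr_right fun hp => ?_
  constructor
  · intro hcirc
    have hψ : Continuous (fun q : (X → X) × (X → X) => (q.1 ∘ u, q.2)) :=
      (continuous_pi fun x => (continuous_apply (u x)).comp continuous_fst).prodMk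
        continuous_snd
    have hsub : (fun q : (X → X) × (X → X) => (q.1 ∘ u, q.2)) '' S1 ⊆ S2 := by
      rintro _ ⟨q, ⟨g, b, hb, rfl⟩, rfl⟩
      refine ⟨(fun x : X => g • x) ∘ u, hideal _ (subset_closure ⟨g, rfl⟩) u huM, b, hb, ?_⟩
      simp [Function.comp_assoc, hub b hb]
    have h1 : (u ∘ u, p) ∈ closure S2 := by
      have := image_closure_subset_closure_image (s := S1) hψ ⟨(u, p), hcirc, rfl⟩
      exact closure_mono hsub this
    rwa [hu] at h1
  · intro h
    refine closure_minimal ?_ isClosed_closure h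
    intro q hq
    obtain ⟨η, hη, a, ha, rfl⟩ := hq
    have hφ : Continuous (fun f : X → X => ((f, f ∘ a) : (X → X) × (X → X))) :=
      continuous_id.prodMk (continuous_pi fun x => continuous_apply (a x))
    have hηE : η ∈ closure (Set.range fun g : G => fun x : X => g • x) := hME hη
    have : (η, η ∘ a) ∈ closure ((fun f : X → X => ((f, f ∘ a) : (X → X) × (X → X))) ''
        (Set.range fun g : G => fun x : X => g • x)) :=
      image_closure_subset_closure_image hφ ⟨η, hηE, rfl⟩
    refine closure_mono ?_ this
    rintro _ ⟨_, ⟨g, rfl⟩, rfl⟩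
    exact ⟨g, a, ha, rfl⟩
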